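/- Let n be a positive integer and let φ be a kV₄-module endomorphism of M_n whose range equals the one-dimensional subspace k·b_1. Then φ does not factor through a projective kV₄-module. -/

import Mathlib

universe u v w

/-- A homomorphism of `A`-modules factors through a projective `A`-module. -/
def FactorsThroughProjective {A : Type u} [Ring A] {M : Type v} {N : Type w}
    [AddCommGroup M] [Module A M] [AddCommGroup N] [Module A N]
    (φ : M →ₗ[A] N) : Prop :=
  ∃ (Q : ModuleCat.{max u v w} A) (f : M →ₗ[A] Q) (g : Q →ₗ[A] N),
    Module.Projective A Q ∧ g ∘ₗ f = φ

/-- The Klein four group. -/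
abbrev V4 : Type := Multiplicative (ZMod 2 × ZMod 2)

/-- The first generator `s` of the Klein four group. -/
def sV4 : V4 := Multiplicative.ofAdd (1, 0)

/-- The second generator `t` of the Klein four group. -/
def tV4 : V4 := Multiplicative.ofAdd (0, 1)

/-- `B` is a `k`-basis `a_1,…,a_n,b_1,…,b_n` of the `kV₄`-module `M` on which
`x = s - 1` and `y = t - 1` act by `x·a_i = b_i`, `y·a_i = b_{i+1}` (`i < n`),
`y·a_n = 0`, `x·b_i = y·b_i = 0`; i.e. `M` is the module `M_n`. -/
def IsKleinModuleBasis (k : Type) [Field k] (n : ℕ) (M : Type) [AddCommGroup M]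
    [Module k M] [Module (MonoidAlgebra k V4) M]
    [IsScalarTower k (MonoidAlgebra k V4) M]
    (B : Module.Basis (Fin n ⊕ Fin n) k M) : Prop :=
  (∀ i : Fin n, (MonoidAlgebra.of k V4 sV4 - 1) • B (Sum.inl i) = B (Sum.inr i)) ∧
  (∀ (i : Fin n) (h : (i : ℕ) + 1 < n),
      (MonoidAlgebra.of k V4 tV4 - 1) • B (Sum.inl i) = B (Sum.inr ⟨(i : ℕ) + 1, h⟩)) ∧
  (∀ i : Fin n, (i : ℕ) + 1 = n → (MonoidAlgebra.of k V4 tV4 - 1) • B (Sum.inl i) = 0) ∧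
  (∀ i : Fin n, (MonoidAlgebra.of k V4 sV4 - 1) • B (Sum.inr i) = 0) ∧
  (∀ i : Fin n, (MonoidAlgebra.of k V4 tV4 - 1) • B (Sum.inr i) = 0)

section Aux
set_option linter.unusedSectionVars false
variable (k : Type) [Field k] [CharP k 2]

local notation "X" => (MonoidAlgebra.of k V4 sV4 - 1 : MonoidAlgebra k V4)
local notation "Y" => (MonoidAlgebra.of k V4 tV4 - 1 : MonoidAlgebra k V4)

lemma two_eq_zero_A : (2 : MonoidAlgebra k V4) = 0 := by
  have h1 : (2 : MonoidAlgebra k V4) = algebraMap k (MonoidAlgebra k V4) 2 := (map_ofNat _ 2).symm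
  have h2 : (2 : k) = 0 := by
    have := CharP.cast_eq_zero k 2; exact_mod_cast this
  rw [h1, h2, map_zero]

lemma Xsq : X * X = 0 := by
  have hs : MonoidAlgebra.of k V4 sV4 * MonoidAlgebra.of k V4 sV4 = 1 := by
    rw [← map_mul]
    have : sV4 * sV4 = 1 := by decide
    rw [this, map_one]
  linear_combination hs + (1 - MonoidAlgebra.of k V4 sV4) * two_eq_zero_A k

lemma Ysq : Y * Y = 0 := by
  have hs : MonoidAlgebra.of k V4 tV4 * MonoidAlgebra.of k V4 tV4 = 1 := by
    rw [← map_mul]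
    have : tV4 * tV4 = 1 := by decide
    rw [this, map_one]
  linear_combination hs + (1 - MonoidAlgebra.of k V4 tV4) * two_eq_zero_A k

lemma XY_ne_zero : X * Y ≠ 0 := by
  intro h
  have hst : MonoidAlgebra.of k V4 sV4 * MonoidAlgebra.of k V4 tV4
      = MonoidAlgebra.of k V4 (sV4 * tV4) := (map_mul _ _ _).symm
  have h1 : (MonoidAlgebra.of k V4 (sV4 * tV4) - MonoidAlgebra.of k V4 sV4
      - MonoidAlgebra.of k V4 tV4 + 1 : MonoidAlgebra k V4) = 0 := by
    linear_combination h - hst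
  have h2 : (Finsupp.single (sV4 * tV4) (1:k) - Finsupp.single sV4 1
      - Finsupp.single tV4 1 + Finsupp.single 1 1 : V4 →₀ k) = 0 := congrArg MonoidAlgebra.coeff h1
  have := congrArg (fun f : V4 →₀ k => f (sV4 * tV4)) h2
  have e1 : sV4 ≠ sV4 * tV4 := by decide
  have e2 : tV4 ≠ sV4 * tV4 := by decide
  have e3 : (1 : V4) ≠ sV4 * tV4 := by decide
  simp [Finsupp.single_apply, e1, e2, e3] at this

lemma repA (c : MonoidAlgebra k V4) : ∃ (e : k) (p q : MonoidAlgebra k V4),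
    c = e • 1 + X * p + Y * q := by
  induction c using MonoidAlgebra.induction_on with
  | of g =>
    have hg := (by decide : ∀ g : V4, g = 1 ∨ g = sV4 ∨ g = tV4 ∨ g = sV4 * tV4) g
    rcases hg with rfl | rfl | rfl | rfl
    · exact ⟨1, 0, 0, by simp [← MonoidAlgebra.one_def]⟩
    · exact ⟨1, 1, 0, by simp⟩
    · exact ⟨1, 0, 1, by simp⟩
    · refine ⟨1, 1 + Y, 1, ?_⟩
      rw [map_mul, one_smul]
      ring
  | add f g hf hg =>
    obtain ⟨e, p, q, rfl⟩ := hf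
    obtain ⟨e', p', q', rfl⟩ := hg
    exact ⟨e + e', p + p', q + q', by rw [add_smul]; ring⟩
  | smul r f hf =>
    obtain ⟨e, p, q, rfl⟩ := hf
    refine ⟨r * e, r • p, r • q, ?_⟩
    rw [smul_add, smul_add, mul_smul, mul_smul_comm, mul_smul_comm]

lemma decompA (c : MonoidAlgebra k V4) (hc : (X * Y) * c = 0) :
    ∃ p q : MonoidAlgebra k V4, c = X * p + Y * q := by
  obtain ⟨e, p, q, rfl⟩ := repA k c
  have key : (X * Y) * (e • 1 + X * p + Y * q) = e • (X * Y) := by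
    have h1 := Xsq k
    have h2 := Ysq k
    rw [mul_add, mul_add, mul_smul_comm, mul_one]
    have e1 : X * Y * (X * p) = 0 := by
      calc X * Y * (X * p) = (X * X) * (Y * p) := by ring
      _ = 0 := by rw [h1, zero_mul]
    rw [e1]
    have e2 : X * Y * (Y * q) = 0 := by
      calc X * Y * (Y * q) = (Y * Y) * (X * q) := by ring
      _ = 0 := by rw [h2, zero_mul]
    rw [e2, add_zero, add_zero]
  rw [key] at hc
  have he : e = 0 := by
    by_contra he
    exact XY_ne_zero k (by
      have := congrArg (fun z => e⁻¹ • z) hc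
      simpa [smul_smul, inv_mul_cancel₀ he] using this)
  exact ⟨p, q, by rw [he, zero_smul, zero_add]⟩

lemma decompF {Q : Type*} (f : Q →₀ MonoidAlgebra k V4) (hf : (X * Y) • f = 0) :
    ∃ e e' : Q →₀ MonoidAlgebra k V4, f = X • e + Y • e' := by
  revert hf
  induction f using Finsupp.induction with
  | zero => exact fun _ => ⟨0, 0, by simp⟩
  | single_add q c g hq hc ih =>
    intro hf
    have hgq : g q = 0 := Finsupp.notMem_support_iff.mp hq
    have happ := congrArg (fun z : Q →₀ MonoidAlgebra k V4 => z q) hf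
    have hXYc : (X * Y) * c = 0 := by
      simpa [Finsupp.smul_apply, Finsupp.add_apply, Finsupp.single_eq_same, hgq,
        smul_eq_mul] using happ
    have hg0 : (X * Y) • g = 0 := by
      have h1 : (X * Y) • (Finsupp.single q c + g)
          = Finsupp.single q ((X * Y) * c) + (X * Y) • g := by
        rw [smul_add, Finsupp.smul_single, smul_eq_mul]
      rw [h1, hXYc, Finsupp.single_zero, zero_add] at hf
      exact hf
    obtain ⟨e, e', he⟩ := ih hg0
    obtain ⟨p, p', hp⟩ := decompA k c hXYc
    refine ⟨Finsupp.single q p + e, Finsupp.single q p' + e', ?_⟩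
    rw [smul_add, smul_add, Finsupp.smul_single, Finsupp.smul_single, smul_eq_mul,
      smul_eq_mul, he, hp, Finsupp.single_add]
    abel

variable (M : Type) [AddCommGroup M] [Module k M] [Module (MonoidAlgebra k V4) M]
    [IsScalarTower k (MonoidAlgebra k V4) M]

/-- Scalar multiplication by a fixed element of the monoid algebra, as a `k`-linear map. -/
noncomputable def lsmK (a : MonoidAlgebra k V4) : M →ₗ[k] M :=
  (LinearMap.lsmul (MonoidAlgebra k V4) M a).restrictScalars k

@[simp] lemma lsmK_apply (a : MonoidAlgebra k V4) (m : M) : lsmK k M a m = a • m := rfl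

set_option maxHeartbeats 2000000 in
theorem main (n : ℕ) (hn : 0 < n)
    (B : Module.Basis (Fin n ⊕ Fin n) k M) (hB : IsKleinModuleBasis k n M B)
    (φ : M →ₗ[MonoidAlgebra k V4] M)
    (hrange : Set.range φ = (Submodule.span k {B (Sum.inr ⟨0, hn⟩)} : Submodule k M)) :
    ¬ FactorsThroughProjective φ := by
  obtain ⟨hXa, hYa, hYan, hXb, hYb⟩ := hB
  rintro ⟨Q, f, g, hproj, hfac⟩
  obtain ⟨sec, hsec⟩ := Module.projective_def'.mp hproj
  set ψ : M →ₗ[MonoidAlgebra k V4] (Q →₀ MonoidAlgebra k V4) := sec ∘ₗ f with hψdef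
  set gH : (Q →₀ MonoidAlgebra k V4) →ₗ[MonoidAlgebra k V4] M :=
    g ∘ₗ (Finsupp.linearCombination (MonoidAlgebra k V4) id) with hgHdef
  have hcomp : ∀ m : M, gH (ψ m) = φ m := by
    intro m
    have h1 := LinearMap.congr_fun hsec (f m)
    simp only [LinearMap.comp_apply, LinearMap.id_apply] at h1
    show g ((Finsupp.linearCombination (MonoidAlgebra k V4) id) (sec (f m))) = φ m
    rw [h1, ← hfac]
    rfl
  -- basic module facts
  have xyM : ∀ m : M, (X * Y) • m = 0 := by
    have h0 : lsmK k M (X * Y) = 0 := by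
      apply B.ext
      rintro (i | i)
      · show (X * Y) • B (Sum.inl i) = 0
        rw [mul_smul]
        by_cases hi : (i : ℕ) + 1 < n
        · rw [hYa i hi, hXb]
        · rw [hYan i (by omega), smul_zero]
      · show (X * Y) • B (Sum.inr i) = 0
        rw [mul_smul, hYb, smul_zero]
    intro m
    exact LinearMap.congr_fun h0 m
  have coordB : ∀ (v w : Fin n ⊕ Fin n), B.coord v (B w) = if w = v then 1 else 0 := by
    intro v w
    rw [Module.Basis.coord_apply, Module.Basis.repr_self, Finsupp.single_apply]
  have sX : ∀ (j : Fin n) (m : M), B.coord (Sum.inl j) ((MonoidAlgebra.of k V4 sV4 - 1) • m) = 0 := by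
    intro j
    have h0 : (B.coord (Sum.inl j)) ∘ₗ lsmK k M X = 0 := by
      apply B.ext
      rintro (i | i) <;>
        simp only [LinearMap.comp_apply, lsmK_apply, LinearMap.zero_apply]
      · rw [hXa i, coordB]; simp
      · rw [hXb i, map_zero]
    intro m
    exact LinearMap.congr_fun h0 m
  have sY : ∀ (j : Fin n) (m : M), B.coord (Sum.inl j) ((MonoidAlgebra.of k V4 tV4 - 1) • m) = 0 := by
    intro j
    have h0 : (B.coord (Sum.inl j)) ∘ₗ lsmK k M Y = 0 := by
      apply B.ext
      rintro (i | i) <;>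
        simp only [LinearMap.comp_apply, lsmK_apply, LinearMap.zero_apply]
      · by_cases hi : (i : ℕ) + 1 < n
        · rw [hYa i hi, coordB]; simp
        · rw [hYan i (by omega), map_zero]
      · rw [hYb i, map_zero]
    intro m
    exact LinearMap.congr_fun h0 m
  -- coordinates of X•m, Y•m in terms of a-coordinates
  have pX : ∀ (j : Fin n) (m : M),
      B.coord (Sum.inr j) ((MonoidAlgebra.of k V4 sV4 - 1) • m) = B.coord (Sum.inl j) m := by
    intro j
    have h0 : (B.coord (Sum.inr j)) ∘ₗ lsmK k M X = B.coord (Sum.inl j) := by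
      apply B.ext
      rintro (i | i) <;>
        simp only [LinearMap.comp_apply, lsmK_apply]
      · rw [hXa i, coordB, coordB]; simp
      · rw [hXb i, map_zero, coordB]; simp
    intro m
    exact LinearMap.congr_fun h0 m
  have pY0 : ∀ (m : M),
      B.coord (Sum.inr ⟨0, hn⟩) ((MonoidAlgebra.of k V4 tV4 - 1) • m) = 0 := by
    have h0 : (B.coord (Sum.inr ⟨0, hn⟩)) ∘ₗ lsmK k M Y = 0 := by
      apply B.ext
      rintro (i | i) <;>
        simp only [LinearMap.comp_apply, lsmK_apply, LinearMap.zero_apply]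
      · by_cases hi : (i : ℕ) + 1 < n
        · rw [hYa i hi, coordB]
          simp [Fin.ext_iff]
        · rw [hYan i (by omega), map_zero]
      · rw [hYb i, map_zero]
    intro m
    exact LinearMap.congr_fun h0 m
  have pYsucc : ∀ (j : Fin n) (hj : (j : ℕ) + 1 < n) (m : M),
      B.coord (Sum.inr ⟨(j : ℕ) + 1, hj⟩) ((MonoidAlgebra.of k V4 tV4 - 1) • m)
        = B.coord (Sum.inl j) m := by
    intro j hj
    have h0 : (B.coord (Sum.inr ⟨(j : ℕ) + 1, hj⟩)) ∘ₗ lsmK k M Y = B.coord (Sum.inl j) := by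
      apply B.ext
      rintro (i | i) <;>
        simp only [LinearMap.comp_apply, lsmK_apply]
      · by_cases hi : (i : ℕ) + 1 < n
        · rw [hYa i hi, coordB, coordB]
          simp [Fin.ext_iff]
        · rw [hYan i (by omega), map_zero, coordB]
          have : i ≠ j := by
            intro h; subst h; omega
          simp [this]
      · rw [hYb i, map_zero, coordB]; simp
    intro m
    exact LinearMap.congr_fun h0 m
  -- decompositions of ψ(a i)
  have hpsixy : ∀ i : Fin n, (X * Y) • ψ (B (Sum.inl i)) = 0 := by
    intro i
    rw [← map_smul, xyM, map_zero]
  have hdec : ∀ i : Fin n, ∃ e e' : Q →₀ MonoidAlgebra k V4,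
      ψ (B (Sum.inl i)) = X • e + Y • e' := fun i => decompF k _ (hpsixy i)
  choose E F hEF using hdec
  have hci : ∀ i : Fin n, ∃ c : k, φ (B (Sum.inl i)) = c • B (Sum.inr ⟨0, hn⟩) := by
    intro i
    have hmem : φ (B (Sum.inl i)) ∈ Set.range φ := ⟨_, rfl⟩
    rw [hrange] at hmem
    obtain ⟨cc, hcc⟩ := Submodule.mem_span_singleton.mp hmem
    exact ⟨cc, hcc.symm⟩
  choose c hc using hci
  have R1 : ∀ i : Fin n, φ (B (Sum.inl i)) = X • gH (E i) + Y • gH (F i) := by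
    intro i
    rw [← hcomp, hEF i, map_add, map_smul, map_smul]
  -- (†)
  have dagger : ∀ i : Fin n, c i = B.coord (Sum.inl ⟨0, hn⟩) (gH (E i)) := by
    intro i
    have h1 := congrArg (B.coord (Sum.inr ⟨0, hn⟩)) (R1 i)
    rw [hc i, map_smul, map_add, pX, pY0, add_zero, coordB, if_pos rfl] at h1
    simpa using h1
  -- (‡)
  have ddagger : ∀ (i : Fin n) (j : Fin n) (hj : (j : ℕ) + 1 < n),
      B.coord (Sum.inl ⟨(j : ℕ) + 1, hj⟩) (gH (E i)) + B.coord (Sum.inl j) (gH (F i)) = 0 := by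
    intro i j hj
    have h1 := congrArg (B.coord (Sum.inr ⟨(j : ℕ) + 1, hj⟩)) (R1 i)
    have hne : (Sum.inr (⟨0, hn⟩ : Fin n) : Fin n ⊕ Fin n) ≠ Sum.inr ⟨(j : ℕ) + 1, hj⟩ := by
      simp [Fin.ext_iff]
    rw [hc i, map_smul, map_add, pX, pYsucc j hj, coordB, if_neg hne, smul_zero] at h1
    exact h1.symm
  -- (R2)
  have R2 : ∀ (i : Fin n) (hi : (i : ℕ) + 1 < n) (j : Fin n),
      B.coord (Sum.inl j) (gH (E i)) = B.coord (Sum.inl j) (gH (F ⟨(i : ℕ) + 1, hi⟩)) := by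
    intro i hi j
    have h1 : (X * Y) • E i = ψ (B (Sum.inr ⟨(i : ℕ) + 1, hi⟩)) := by
      have h2 := congrArg (fun z : Q →₀ MonoidAlgebra k V4 => Y • z) (hEF i)
      simp only [smul_add, smul_smul] at h2
      rw [← map_smul, hYa i hi, Ysq k, zero_smul, add_zero, mul_comm] at h2
      exact h2.symm
    have h2 : (X * Y) • F ⟨(i : ℕ) + 1, hi⟩ = ψ (B (Sum.inr ⟨(i : ℕ) + 1, hi⟩)) := by
      have h3 := congrArg (fun z : Q →₀ MonoidAlgebra k V4 => X • z) (hEF ⟨(i : ℕ) + 1, hi⟩)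
      simp only [smul_add, smul_smul] at h3
      rw [← map_smul, hXa, Xsq k, zero_smul, zero_add] at h3
      exact h3.symm
    have hd : (X * Y) • (E i - F ⟨(i : ℕ) + 1, hi⟩) = 0 := by
      rw [smul_sub, h1, h2, sub_self]
    obtain ⟨p, q, hpq⟩ := decompF k _ hd
    have h5 : gH (E i) - gH (F ⟨(i : ℕ) + 1, hi⟩) = X • gH p + Y • gH q := by
      rw [← map_sub, hpq, map_add, map_smul, map_smul]
    have h4 := congrArg (B.coord (Sum.inl j)) h5
    rw [map_sub, map_add, sX, sY, add_zero] at h4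
    exact sub_eq_zero.mp h4
  -- (R3)
  have R3 : ∀ (i : Fin n), (i : ℕ) + 1 = n → ∀ j : Fin n,
      B.coord (Sum.inl j) (gH (E i)) = 0 := by
    intro i hi j
    have hd : (X * Y) • E i = 0 := by
      have h2 := congrArg (fun z : Q →₀ MonoidAlgebra k V4 => Y • z) (hEF i)
      simp only [smul_add, smul_smul] at h2
      rw [← map_smul, hYan i hi, map_zero, Ysq k, zero_smul, add_zero, mul_comm] at h2
      exact h2.symm
    obtain ⟨p, q, hpq⟩ := decompF k _ hd
    have h5 : gH (E i) = X • gH p + Y • gH q := by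
      rw [hpq, map_add, map_smul, map_smul]
    have h4 := congrArg (B.coord (Sum.inl j)) h5
    rw [map_add, sX, sY, add_zero] at h4
    exact h4
  -- induction
  have key : ∀ (m : ℕ) (i j : Fin n), (i : ℕ) + m = n - 1 → (j : ℕ) ≤ (i : ℕ) →
      B.coord (Sum.inl j) (gH (E i)) = 0 := by
    intro m
    induction m with
    | zero =>
      intro i j hi _
      exact R3 i (by omega) j
    | succ m ih =>
      intro i j hi hj
      have hi1 : (i : ℕ) + 1 < n := by omega
      have hj1 : (j : ℕ) + 1 < n := by omega
      have e2 := ddagger ⟨(i : ℕ) + 1, hi1⟩ j hj1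
      have e3 : B.coord (Sum.inl ⟨(j : ℕ) + 1, hj1⟩) (gH (E ⟨(i : ℕ) + 1, hi1⟩)) = 0 :=
        ih ⟨(i : ℕ) + 1, hi1⟩ ⟨(j : ℕ) + 1, hj1⟩ (by simp only [Fin.val_mk]; omega) (by simp only [Fin.mk_le_mk]; omega)
      rw [e3, zero_add] at e2
      rw [R2 i hi1 j, e2]
  have hc0 : ∀ i : Fin n, c i = 0 := by
    intro i
    rw [dagger i]
    exact key (n - 1 - (i : ℕ)) i ⟨0, hn⟩ (by omega) (by simp)
  have hphia : ∀ i : Fin n, φ (B (Sum.inl i)) = 0 := by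
    intro i; rw [hc i, hc0 i, zero_smul]
  have hphib : ∀ i : Fin n, φ (B (Sum.inr i)) = 0 := by
    intro i
    rw [← hXa i, map_smul, hphia i, smul_zero]
  have hphi0 : ∀ m : M, φ m = 0 := by
    have h0 : (φ.restrictScalars k : M →ₗ[k] M) = 0 := by
      apply B.ext
      rintro (i | i)
      · exact hphia i
      · exact hphib i
    intro m
    exact LinearMap.congr_fun h0 m
  have hb0 : B (Sum.inr ⟨0, hn⟩) ∈ Set.range φ := by
    rw [hrange]
    exact Submodule.mem_span_singleton_self _
  obtain ⟨m, hm⟩ := hb0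
  rw [hphi0 m] at hm
  exact B.ne_zero (Sum.inr ⟨0, hn⟩) hm.symm
end Aux

/-- If the range of an endomorphism of `M_n` is exactly the line `k·b_1`, then
it does not factor through a projective `kV₄`-module. -/
theorem stmt9 (k : Type) [Field k] [IsAlgClosed k] [CharP k 2]
    (n : ℕ) (hn : 0 < n)
    (M : Type) [AddCommGroup M] [Module k M] [Module (MonoidAlgebra k V4) M]
    [IsScalarTower k (MonoidAlgebra k V4) M]
    (B : Module.Basis (Fin n ⊕ Fin n) k M) (hB : IsKleinModuleBasis k n M B)
    (φ : M →ₗ[MonoidAlgebra k V4] M)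
    (hrange : Set.range φ = (Submodule.span k {B (Sum.inr ⟨0, hn⟩)} : Submodule k M)) :
    ¬ FactorsThroughProjective φ := by
  exact main k M n hn B hB φ hrange
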